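/- arXiv:2312.13185 — 2 statements merged into one kernel-verified Lean document; each statement's English description precedes it below -/
import Mathlib

section
/- Corollary 1 (MBQC without corrections): let T be a unitary on N qubits with T^L = 1, let D be a multiple of L, let θ_i^j ∈ ℝ and measurement outcomes m_i^j ∈ {0,1} for i = 1,…,N, j = 1,…,D. For each j define the linear map E_j^{(m)} : (ℂ²)^{⊗N} → (ℂ²)^{⊗N} by E_j^{(m)}(v) := (√2)^N · ((⊗_{i=1}^{N} ⟨+| Z^{m_i^j}) ⊗ 1) · U_T · ( (∏_{i=N,…,1} exp(iθ_i^j Z_i)) v ⊗ |+⟩^{⊗N} ), i.e. one uncorrected unit cell of Algorithm 1 with outcomes m_i^j. Then E_D^{(m)} ∘ ⋯ ∘ E_1^{(m)} = ∏_{j=D,…,1} ∏_{i=N,…,1} ( T^{e(j)} Z_i (T^{e(j)})† )^{m_i^j} · exp( iθ_i^j · T^{e(j)} Z_i (T^{e(j)})† ), where e(j) := (L - (j mod L) + 1) mod L and products are ordered so that the factor with the smallest index acts first (rightmost). -/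
open Matrix Complex
open scoped Kronecker Classical

noncomputable section

namespace QCA

/-- Computational-basis index set of an `N`-qubit register. -/
abbrev QIdx (N : ℕ) := Fin N → Fin 2

/-- Operators (matrices) on an `N`-qubit register `(ℂ²)^{⊗N}`. -/
abbrev MatQ (N : ℕ) := Matrix (QIdx N) (QIdx N) ℂ

/-- Pauli X. -/
def Xg : Matrix (Fin 2) (Fin 2) ℂ := !![0, 1; 1, 0]

/-- Pauli Z. -/
def Zg : Matrix (Fin 2) (Fin 2) ℂ := !![1, 0; 0, -1]

/-- Pauli Y = i·X·Z. -/
def Yg : Matrix (Fin 2) (Fin 2) ℂ := Complex.I • (Xg * Zg)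

/-- Hadamard gate. -/
def Hg : Matrix (Fin 2) (Fin 2) ℂ := (Real.sqrt 2 : ℂ)⁻¹ • !![1, 1; 1, -1]

/-- Phase gate S = diag(1, i). -/
def Sg : Matrix (Fin 2) (Fin 2) ℂ := !![1, 0; 0, Complex.I]

/-- √X := H·S·H. -/
def sqrtXg : Matrix (Fin 2) (Fin 2) ℂ := Hg * Sg * Hg

/-- The ket |+⟩ = (|0⟩+|1⟩)/√2. -/
def ketPlus : Fin 2 → ℂ := fun _ => (Real.sqrt 2 : ℂ)⁻¹

/-- The bra ⟨+|. -/
def braPlus : Fin 2 → ℂ := fun a => star (ketPlus a)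

/-- The product state |+⟩^{⊗ι}. -/
def ketPlusAll (ι : Type*) [Fintype ι] : (ι → Fin 2) → ℂ := fun s => ∏ i, ketPlus (s i)

/-- Kronecker product of two vectors. -/
def kronVec {a b : Type*} (v : a → ℂ) (w : b → ℂ) : a × b → ℂ := fun p => v p.1 * w p.2

variable {ι : Type*} [Fintype ι] [DecidableEq ι]

/-- `op1 P i` acts as the one-qubit operator `P` on qubit `i` and as the identity elsewhere. -/
def op1 (P : Matrix (Fin 2) (Fin 2) ℂ) (i : ι) : Matrix (ι → Fin 2) (ι → Fin 2) ℂ :=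
  fun s t => P (s i) (t i) * ∏ j ∈ Finset.univ.erase i, (if s j = t j then (1 : ℂ) else 0)

/-- Controlled-Z gate between qubits `i` and `j` (identity elsewhere). -/
def cz2 (i j : ι) : Matrix (ι → Fin 2) (ι → Fin 2) ℂ :=
  Matrix.diagonal fun s => if s i = 1 ∧ s j = 1 then (-1 : ℂ) else 1

/-- The Z-rotation exp(iθ Z_i) on qubit `i`. -/
def rotZ (θ : ℝ) (i : ι) : Matrix (ι → Fin 2) (ι → Fin 2) ℂ :=
  NormedSpace.exp (((θ : ℂ) * Complex.I) • op1 Zg i)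

/-- The layer ∏_{i=1}^{N} H_i of Hadamards on every site of a ring of `N` qubits. -/
def hadamardLayer (N : ℕ) : MatQ N := (List.ofFn fun i : Fin N => op1 Hg i).prod

/-- The layer ∏_{i=1}^{N} CZ_{i,i+1} of controlled-Z gates on a ring of `N` qubits
(site indices mod `N`; the factors pairwise commute). -/
def czRing (N : ℕ) [NeZero N] : MatQ N := (List.ofFn fun i : Fin N => cz2 i (i + 1)).prod

/-- The layer ∏_{i=1}^{N} (√X)_i on a ring of `N` qubits. -/
def sqrtXLayer (N : ℕ) : MatQ N := (List.ofFn fun i : Fin N => op1 sqrtXg i).prod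

/-- The cluster CQCA T_c = (∏ H_i)·(∏ CZ_{i,i+1}) on a ring of `N` qubits. -/
def Tc (N : ℕ) [NeZero N] : MatQ N := hadamardLayer N * czRing N

/-- The periodic CQCA T̃_c = ∏ CZ_{i,i+1} on a ring of `N` qubits. -/
def Ttc (N : ℕ) [NeZero N] : MatQ N := czRing N

/-- The fractal CQCA T̂_c = (∏ H_i)·(∏ CZ_{i,i+1})·(∏ (√X)_i) on a ring of `N` qubits. -/
def Thc (N : ℕ) [NeZero N] : MatQ N := hadamardLayer N * czRing N * sqrtXLayer N

/-- Controlled-Z between input qubit `i` and output qubit `i` on a doubled register. -/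
def czIO {N : ℕ} (i : Fin N) : Matrix (QIdx N × QIdx N) (QIdx N × QIdx N) ℂ :=
  Matrix.diagonal fun p => if p.1 i = 1 ∧ p.2 i = 1 then (-1 : ℂ) else 1

/-- The unitary U_T = (1 ⊗ T)·(∏_i H_i^{(out)})·(∏_i CZ_{i,i}^{(in,out)}) of Eq. (16). -/
def UT {N : ℕ} (T : MatQ N) : Matrix (QIdx N × QIdx N) (QIdx N × QIdx N) ℂ :=
  ((1 : MatQ N) ⊗ₖ T) *
    (List.ofFn fun i : Fin N => (1 : MatQ N) ⊗ₖ op1 Hg i).prod *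
    (List.ofFn fun i : Fin N => czIO i).prod

/-- Contraction of the input register with the product bra `⊗_i bra i`. -/
def contractIn {N : ℕ} (bra : Fin N → Fin 2 → ℂ) (v : QIdx N × QIdx N → ℂ) : QIdx N → ℂ :=
  fun t => ∑ s : QIdx N, (∏ i, bra i (s i)) * v (s, t)

lemma diagonal_commute {α : Type*} [Fintype α] [DecidableEq α] (d e : α → ℂ) :
    Commute (Matrix.diagonal d) (Matrix.diagonal e) := by
  unfold Commute SemiconjBy
  have h : (fun i => d i * e i) = fun i => e i * d i := by funext x; ring
  rw [Matrix.diagonal_mul_diagonal, Matrix.diagonal_mul_diagonal, h]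

lemma Zg_eq_diagonal : Zg = Matrix.diagonal ![1, -1] := by
  ext i j
  fin_cases i <;> fin_cases j <;> simp [Zg, Matrix.diagonal]

lemma op1_diagonal (d : Fin 2 → ℂ) (i : ι) :
    op1 (Matrix.diagonal d) i = Matrix.diagonal (fun s => d (s i)) := by
  ext s t
  by_cases h : s = t
  · subst h
    simp [op1, Matrix.diagonal_apply_eq]
  · rw [Matrix.diagonal_apply_ne _ h]
    by_cases hi : s i = t i
    · obtain ⟨k, hk⟩ : ∃ k, s k ≠ t k := Function.ne_iff.mp h
      have hki : k ≠ i := by rintro rfl; exact hk hi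
      have h0 : (if s k = t k then (1 : ℂ) else 0) = 0 := by simp [hk]
      unfold op1
      rw [Finset.prod_eq_zero (Finset.mem_erase.mpr ⟨hki, Finset.mem_univ k⟩) h0]
      ring
    · unfold op1
      rw [Matrix.diagonal_apply_ne _ hi]
      ring

/-- The controlled-Z gate attached to an (undirected) edge `e`. -/
def czEdge {N : ℕ} (e : Sym2 (Fin N)) : MatQ N :=
  Matrix.diagonal fun s => if ∀ i ∈ e, s i = 1 then (-1 : ℂ) else 1

/-- The unitary ∏_{{i,j} ∈ E(G)} CZ_{i,j} preparing the graph state (the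
factors pairwise commute, so the product over the edge set is well defined). -/
def graphUnitary {N : ℕ} (G : SimpleGraph (Fin N)) [DecidableRel G.Adj] : MatQ N :=
  G.edgeFinset.noncommProd czEdge (by intro a _ b _ _; exact diagonal_commute _ _)

/-- The graph state |G⟩ = (∏_{{i,j} ∈ E(G)} CZ_{i,j}) |+⟩^{⊗N}. -/
def graphState {N : ℕ} (G : SimpleGraph (Fin N)) [DecidableRel G.Adj] : QIdx N → ℂ :=
  (graphUnitary G).mulVec (ketPlusAll (Fin N))

/-- The stabilizer generator K_v = X_v · ∏_{w ∈ N_G(v)} Z_w of the graph state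
(the Z factors pairwise commute, so the product is well defined). -/
def stabGen {N : ℕ} (G : SimpleGraph (Fin N)) [DecidableRel G.Adj] (v : Fin N) : MatQ N :=
  op1 Xg v *
    (G.neighborFinset v).noncommProd (fun w => op1 Zg w)
      (by
        intro a _ b _ _
        simp only [Function.onFun]
        rw [Zg_eq_diagonal, op1_diagonal, op1_diagonal]
        exact diagonal_commute _ _)


/-! ### Auxiliary machinery for Corollary 1 -/

section Aux

variable {κ : Type*} [Fintype κ] [DecidableEq κ]

/-- Diagonal entries of the Pauli Z. -/
def zd : Fin 2 → ℂ := ![1, -1]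

lemma Zg_pow_eq (k : ℕ) : Zg ^ k = Matrix.diagonal (fun x => zd x ^ k) := by
  rw [Zg_eq_diagonal, Matrix.diagonal_pow]
  rfl

/-- Full tensor product of one-qubit matrices. -/
def tAll (f : κ → Matrix (Fin 2) (Fin 2) ℂ) : Matrix (κ → Fin 2) (κ → Fin 2) ℂ :=
  Matrix.of fun s t => ∏ i, f i (s i) (t i)

lemma tAll_apply (f : κ → Matrix (Fin 2) (Fin 2) ℂ) (s t : κ → Fin 2) :
    tAll f s t = ∏ i, f i (s i) (t i) := rfl

lemma tAll_one : tAll (fun _ : κ => (1 : Matrix (Fin 2) (Fin 2) ℂ)) = 1 := by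
  ext s t
  by_cases h : s = t
  · subst h
    simp [tAll_apply, Matrix.one_apply]
  · obtain ⟨i, hi⟩ := Function.ne_iff.mp h
    rw [tAll_apply, Matrix.one_apply_ne h]
    exact Finset.prod_eq_zero (Finset.mem_univ i) (Matrix.one_apply_ne hi)

lemma tAll_mul (f g : κ → Matrix (Fin 2) (Fin 2) ℂ) :
    tAll f * tAll g = tAll (fun i => f i * g i) := by
  ext s t
  rw [Matrix.mul_apply, tAll_apply]
  have h : ∀ i : κ, (f i * g i) (s i) (t i) = ∑ a : Fin 2, f i (s i) a * g i a (t i) :=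
    fun i => Matrix.mul_apply
  calc ∑ u : κ → Fin 2, tAll f s u * tAll g u t
      = ∑ u : κ → Fin 2, ∏ i, (f i (s i) (u i) * g i (u i) (t i)) := by
        refine Finset.sum_congr rfl fun u _ => ?_
        rw [tAll_apply, tAll_apply, ← Finset.prod_mul_distrib]
    _ = ∏ i, ∑ a : Fin 2, f i (s i) a * g i a (t i) := by
        rw [Finset.prod_univ_sum, Fintype.piFinset_univ]
    _ = ∏ i, (f i * g i) (s i) (t i) := by
        exact Finset.prod_congr rfl fun i _ => (h i).symm

lemma op1_eq_tAll (P : Matrix (Fin 2) (Fin 2) ℂ) (i : κ) :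
    op1 P i = tAll (fun j => if j = i then P else 1) := by
  ext s t
  rw [tAll_apply,
    ← Finset.mul_prod_erase Finset.univ
      (fun j => (if j = i then P else 1) (s j) (t j)) (Finset.mem_univ i)]
  show op1 P i s t = _
  unfold op1
  congr 1
  · simp
  · refine Finset.prod_congr rfl fun j hj => ?_
    rw [if_neg (Finset.mem_erase.mp hj).1, Matrix.one_apply]

lemma prod_map_op1 (P : κ → Matrix (Fin 2) (Fin 2) ℂ) :
    ∀ l : List κ, l.Nodup →
      (l.map fun i => op1 (P i) i).prod = tAll (fun j => if j ∈ l then P j else 1)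
  | [], _ => by
      simp only [List.map_nil, List.prod_nil, List.not_mem_nil, if_false]
      exact tAll_one.symm
  | a :: l, h => by
      obtain ⟨ha, hl⟩ := List.nodup_cons.mp h
      rw [List.map_cons, List.prod_cons, prod_map_op1 P l hl, op1_eq_tAll, tAll_mul]
      refine congrArg tAll (funext fun j => ?_)
      by_cases hj : j = a
      · subst hj
        simp [ha]
      · by_cases hjl : j ∈ l <;> simp [hj, hjl]

lemma prod_ofFn_op1 {N : ℕ} (P : Fin N → Matrix (Fin 2) (Fin 2) ℂ) :
    (List.ofFn fun i => op1 (P i) i).prod = tAll P := by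
  rw [List.ofFn_eq_map, prod_map_op1 _ _ (List.nodup_finRange N)]
  refine congrArg tAll (funext fun j => ?_)
  simp [List.mem_finRange]

lemma prod_map_diag {n : Type*} [Fintype n] [DecidableEq n] {α : Type*} (d : α → n → ℂ) :
    ∀ l : List α,
      (l.map fun a => Matrix.diagonal (d a)).prod
        = Matrix.diagonal fun x => (l.map fun a => d a x).prod
  | [] => by simp
  | a :: l => by
      rw [List.map_cons, List.prod_cons, prod_map_diag d l, Matrix.diagonal_mul_diagonal]
      simp

lemma revprod_ofFn_diag {n : Type*} [Fintype n] [DecidableEq n] {N : ℕ} (d : Fin N → n → ℂ) :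
    (List.ofFn fun i => Matrix.diagonal (d i)).reverse.prod
      = Matrix.diagonal fun x => ∏ i, d i x := by
  rw [List.ofFn_eq_map, ← List.map_reverse, prod_map_diag]
  refine congrArg Matrix.diagonal (funext fun x => ?_)
  rw [List.map_reverse, List.prod_reverse, ← List.ofFn_eq_map (f := fun a => d a x),
    List.prod_ofFn]

lemma prod_map_kron {N : ℕ} :
    ∀ l : List (MatQ N), (l.map fun A => (1 : MatQ N) ⊗ₖ A).prod = (1 : MatQ N) ⊗ₖ l.prod
  | [] => by simp [Matrix.one_kronecker_one]
  | A :: l => by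
      rw [List.map_cons, List.prod_cons, prod_map_kron l, List.prod_cons,
        ← Matrix.mul_kronecker_mul, one_mul]

lemma foldl_mulVec {N : ℕ} :
    ∀ (l : List (MatQ N)) (v : QIdx N → ℂ),
      (l.map fun C => fun w : QIdx N → ℂ => C.mulVec w).foldl (fun w f => f w) v
        = l.reverse.prod.mulVec v
  | [], v => by simp [Matrix.one_mulVec]
  | C :: l, v => by
      rw [List.map_cons, List.foldl_cons, foldl_mulVec l (C.mulVec v), List.reverse_cons,
        List.prod_append, List.prod_singleton, Matrix.mulVec_mulVec]

lemma conj_list_prod {N : ℕ} (U V : MatQ N) (hUV : U * V = 1) (hVU : V * U = 1) :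
    ∀ l : List (MatQ N), (l.map fun A => U * A * V).prod = U * l.prod * V
  | [] => by
      simp only [List.map_nil, List.prod_nil, mul_one]
      exact hUV.symm
  | A :: l => by
      rw [List.map_cons, List.prod_cons, conj_list_prod U V hUV hVU l, List.prod_cons]
      have h : V * (U * (l.prod * V)) = l.prod * V := by
        rw [← mul_assoc, hVU, one_mul]
      simp only [mul_assoc, h]

lemma pow_unitary {N : ℕ} (T : MatQ N) (h1 : T * Tᴴ = 1) (h2 : Tᴴ * T = 1) (k : ℕ) :
    T ^ k * (T ^ k)ᴴ = 1 ∧ (T ^ k)ᴴ * T ^ k = 1 := by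
  induction k with
  | zero => simp
  | succ n ih =>
      constructor
      · rw [pow_succ, Matrix.conjTranspose_mul]
        calc T ^ n * T * ((T)ᴴ * (T ^ n)ᴴ) = T ^ n * (T * Tᴴ) * (T ^ n)ᴴ := by
              simp only [mul_assoc]
          _ = 1 := by rw [h1, mul_one, ih.1]
      · rw [pow_succ, Matrix.conjTranspose_mul]
        calc Tᴴ * (T ^ n)ᴴ * (T ^ n * T) = Tᴴ * ((T ^ n)ᴴ * T ^ n) * T := by
              simp only [mul_assoc]
          _ = 1 := by rw [ih.2, mul_one, h2]

lemma telescope {N : ℕ} (T : MatQ N) (h1 : T * Tᴴ = 1) (h2 : Tᴴ * T = 1) :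
    ∀ (k : ℕ) (A : ℕ → MatQ N),
      (List.ofFn fun j : Fin k => (T ^ (j : ℕ))ᴴ * A (j : ℕ) * T ^ (j : ℕ)).reverse.prod
        = (T ^ k)ᴴ * (List.ofFn fun j : Fin k => T * A (j : ℕ)).reverse.prod := by
  intro k
  induction k with
  | zero => intro A; simp
  | succ n ih =>
      intro A
      rw [List.ofFn_succ' (fun j : Fin (n + 1) => (T ^ (j : ℕ))ᴴ * A (j : ℕ) * T ^ (j : ℕ)),
        List.ofFn_succ' (fun j : Fin (n + 1) => T * A (j : ℕ))]
      simp only [List.concat_eq_append, List.reverse_append, List.reverse_cons,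
        List.reverse_nil, List.nil_append, List.cons_append, List.prod_cons, List.prod_nil,
        Fin.val_last, Fin.coe_castSucc, one_mul]
      rw [ih A]
      have hn := pow_unitary T h1 h2 n
      set P := (List.ofFn fun j : Fin n => T * A (j : ℕ)).reverse.prod with hP
      have e1 : T ^ n * ((T ^ n)ᴴ * P) = P := by rw [← mul_assoc, hn.1, one_mul]
      have e2 : Tᴴ * (T * (A n * P)) = A n * P := by rw [← mul_assoc, h2, one_mul]
      rw [pow_succ']
      rw [Matrix.conjTranspose_mul]
      simp only [mul_assoc, e1, e2]

lemma rotZ_diag {N : ℕ} (θ : ℝ) (i : Fin N) :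
    rotZ θ i = Matrix.diagonal
      (fun s : QIdx N => NormedSpace.exp ((θ : ℂ) * Complex.I * zd (s i))) := by
  unfold rotZ
  rw [Zg_eq_diagonal, op1_diagonal, ← Matrix.diagonal_smul, Matrix.exp_diagonal]
  refine congrArg Matrix.diagonal (funext fun s => ?_)
  rw [Pi.exp_def]
  simp [zd, smul_eq_mul]

lemma sqrt2C_sq : (Real.sqrt 2 : ℂ) * (Real.sqrt 2 : ℂ) = 2 := by
  rw [← Complex.ofReal_mul, Real.mul_self_sqrt (by norm_num)]
  norm_num

lemma sqrt2C_ne : (Real.sqrt 2 : ℂ) ≠ 0 := by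
  intro h
  have := sqrt2C_sq
  rw [h, mul_zero] at this
  norm_num at this

/-- The per-site Hadamard/CZ contraction identity. -/
lemma site_sum (rr ss : Fin 2) :
    ∑ x : Fin 2, Hg rr x * ((if ss = 1 ∧ x = 1 then (-1 : ℂ) else 1) * (Real.sqrt 2 : ℂ)⁻¹)
      = if rr = ss then 1 else 0 := by
  have h2 := sqrt2C_sq
  have hne := sqrt2C_ne
  fin_cases rr <;> fin_cases ss <;>
    simp [Hg, Fin.sum_univ_two] <;>
    field_simp <;>
    linear_combination -h2

/-- The collapsed Hadamard/CZ double-register contraction. -/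
lemma key_sum {N : ℕ} (r s : QIdx N) :
    ∑ b : QIdx N, (∏ i, Hg (r i) (b i)) *
        ((∏ i, if s i = 1 ∧ b i = 1 then (-1 : ℂ) else 1) * ∏ _i : Fin N, (Real.sqrt 2 : ℂ)⁻¹)
      = if r = s then 1 else 0 := by
  calc ∑ b : QIdx N, (∏ i, Hg (r i) (b i)) *
        ((∏ i, if s i = 1 ∧ b i = 1 then (-1 : ℂ) else 1) * ∏ _i : Fin N, (Real.sqrt 2 : ℂ)⁻¹)
      = ∑ b : QIdx N, ∏ i,
          (Hg (r i) (b i) * ((if s i = 1 ∧ b i = 1 then (-1 : ℂ) else 1) * (Real.sqrt 2 : ℂ)⁻¹)) := by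
        refine Finset.sum_congr rfl fun b _ => ?_
        rw [Finset.prod_mul_distrib, Finset.prod_mul_distrib]
    _ = ∏ i, ∑ x : Fin 2,
          (Hg (r i) x * ((if s i = 1 ∧ x = 1 then (-1 : ℂ) else 1) * (Real.sqrt 2 : ℂ)⁻¹)) := by
        rw [Finset.prod_univ_sum, Fintype.piFinset_univ]
    _ = ∏ i, (if r i = s i then (1 : ℂ) else 0) :=
        Finset.prod_congr rfl fun i _ => site_sum (r i) (s i)
    _ = if r = s then 1 else 0 := by
        by_cases h : r = s
        · subst h
          simp
        · obtain ⟨i, hi⟩ := Function.ne_iff.mp h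
          rw [if_neg h]
          exact Finset.prod_eq_zero (Finset.mem_univ i) (if_neg hi)

/-- Structure of `U_T` as a Kronecker product times a diagonal matrix. -/
lemma UT_eq {N : ℕ} (T : MatQ N) :
    UT T = ((1 : MatQ N) ⊗ₖ (T * tAll fun _ => Hg)) *
      Matrix.diagonal (fun p : QIdx N × QIdx N =>
        ∏ i, if p.1 i = 1 ∧ p.2 i = 1 then (-1 : ℂ) else 1) := by
  unfold UT
  have h1 : (List.ofFn fun i : Fin N => (1 : MatQ N) ⊗ₖ op1 Hg i).prod
      = (1 : MatQ N) ⊗ₖ tAll (fun _ => Hg) := by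
    have : (List.ofFn fun i : Fin N => (1 : MatQ N) ⊗ₖ op1 Hg i)
        = (List.ofFn fun i : Fin N => op1 Hg i).map (fun A => (1 : MatQ N) ⊗ₖ A) := by
      rw [List.map_ofFn]; rfl
    rw [this, prod_map_kron, prod_ofFn_op1]
  have h2 : (List.ofFn fun i : Fin N => czIO i).prod
      = Matrix.diagonal (fun p : QIdx N × QIdx N =>
          ∏ i, if p.1 i = 1 ∧ p.2 i = 1 then (-1 : ℂ) else 1) := by
    have hcz : (List.ofFn fun i : Fin N => czIO i)
        = (List.finRange N).map fun i => Matrix.diagonal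
            (fun p : QIdx N × QIdx N => if p.1 i = 1 ∧ p.2 i = 1 then (-1 : ℂ) else 1) := by
      rw [List.ofFn_eq_map]
      rfl
    rw [hcz, prod_map_diag]
    refine congrArg Matrix.diagonal (funext fun p => ?_)
    rw [← List.ofFn_eq_map
      (f := fun i : Fin N => if p.1 i = 1 ∧ p.2 i = 1 then (-1 : ℂ) else 1), List.prod_ofFn]
  rw [h1, h2, ← Matrix.mul_kronecker_mul, one_mul]

lemma mulVec_apply' {m n : Type*} [Fintype n] (M : Matrix m n ℂ) (v : n → ℂ) (x : m) :
    M.mulVec v x = ∑ j, M x j * v j := rfl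

lemma contractIn_apply {N : ℕ} (bra : Fin N → Fin 2 → ℂ) (v : QIdx N × QIdx N → ℂ)
    (t : QIdx N) :
    contractIn bra v t = ∑ s : QIdx N, (∏ i, bra i (s i)) * v (s, t) := rfl

/-- The key single-cell computation: one uncorrected unit cell acts as `T · Z^m`. -/
lemma cell {N : ℕ} (T : MatQ N) (mm : Fin N → Fin 2) (u : QIdx N → ℂ) :
    ((Real.sqrt 2 : ℂ) ^ N) • contractIn (fun i => Matrix.vecMul braPlus (Zg ^ (mm i : ℕ)))
        ((UT T).mulVec (kronVec u (ketPlusAll (Fin N)))) =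
      (T * Matrix.diagonal (fun a : QIdx N => ∏ i, zd (a i) ^ (mm i : ℕ))).mulVec u := by
  have hbra : ∀ (k : ℕ) (x : Fin 2),
      Matrix.vecMul braPlus (Zg ^ k) x = (Real.sqrt 2 : ℂ)⁻¹ * zd x ^ k := by
    intro k x
    rw [Zg_pow_eq, Matrix.vecMul_diagonal]
    congr 1
    unfold braPlus ketPlus
    simp
  have hstep : ∀ (s t : QIdx N),
      ((UT T).mulVec (kronVec u (ketPlusAll (Fin N)))) (s, t) = T t s * u s := by
    intro s t
    rw [UT_eq, mulVec_apply']
    rw [Fintype.sum_prod_type, Finset.sum_comm]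
    simp only [Matrix.mul_diagonal, Matrix.kroneckerMap_apply, Matrix.one_apply, kronVec,
      ite_mul, one_mul, zero_mul, Finset.sum_ite_eq, Finset.mem_univ, if_true]
    have expand : ∀ b : QIdx N, (T * tAll fun _ : Fin N => Hg) t b
        = ∑ r : QIdx N, T t r * ∏ i, Hg (r i) (b i) := fun b => Matrix.mul_apply
    calc ∑ b : QIdx N, (T * tAll fun _ : Fin N => Hg) t b *
            (∏ i, if s i = 1 ∧ b i = 1 then (-1 : ℂ) else 1) * (u s * ketPlusAll (Fin N) b)
        = ∑ r : QIdx N, ∑ b : QIdx N, (T t r * u s) *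
            ((∏ i, Hg (r i) (b i)) *
              ((∏ i, if s i = 1 ∧ b i = 1 then (-1 : ℂ) else 1) *
                ∏ _i : Fin N, (Real.sqrt 2 : ℂ)⁻¹)) := by
          rw [Finset.sum_comm]
          refine Finset.sum_congr rfl fun b _ => ?_
          rw [expand b, Finset.sum_mul, Finset.sum_mul]
          refine Finset.sum_congr rfl fun r _ => ?_
          have hq : ketPlusAll (Fin N) b = ∏ _i : Fin N, (Real.sqrt 2 : ℂ)⁻¹ := rfl
          rw [hq]
          ring
      _ = ∑ r : QIdx N, (T t r * u s) * (if r = s then 1 else 0) := by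
          refine Finset.sum_congr rfl fun r _ => ?_
          rw [← Finset.mul_sum, key_sum r s]
      _ = T t s * u s := by simp
  funext t
  rw [Pi.smul_apply, smul_eq_mul, contractIn_apply, mulVec_apply']
  rw [Finset.mul_sum]
  refine Finset.sum_congr rfl fun s _ => ?_
  rw [hstep s t, Matrix.mul_diagonal]
  have hB : (∏ i, Matrix.vecMul braPlus (Zg ^ (mm i : ℕ)) (s i))
      = (Real.sqrt 2 : ℂ)⁻¹ ^ N * ∏ i, zd (s i) ^ (mm i : ℕ) := by
    calc (∏ i, Matrix.vecMul braPlus (Zg ^ (mm i : ℕ)) (s i))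
        = ∏ i, ((Real.sqrt 2 : ℂ)⁻¹ * zd (s i) ^ (mm i : ℕ)) :=
          Finset.prod_congr rfl fun i _ => hbra _ _
      _ = (∏ _i : Fin N, (Real.sqrt 2 : ℂ)⁻¹) * ∏ i, zd (s i) ^ (mm i : ℕ) :=
          Finset.prod_mul_distrib
      _ = _ := by rw [Finset.prod_const, Finset.card_univ, Fintype.card_fin]
  rw [hB]
  have hone : (Real.sqrt 2 : ℂ) ^ N * (Real.sqrt 2 : ℂ)⁻¹ ^ N = 1 := by
    rw [← mul_pow, mul_inv_cancel₀ sqrt2C_ne, one_pow]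
  linear_combination (∏ i, zd (s i) ^ (mm i : ℕ)) * T t s * u s * hone

/-- One conjugated unit-cell factor of the right-hand side. -/
lemma rhs_j {N : ℕ} (U V : MatQ N) (hUV : U * V = 1) (hVU : V * U = 1)
    (θi : Fin N → ℝ) (mi : Fin N → Fin 2) :
    (List.ofFn fun i : Fin N =>
        (U * op1 Zg i * V) ^ (mi i : ℕ) *
          NormedSpace.exp (((θi i : ℂ) * Complex.I) • (U * op1 Zg i * V))).reverse.prod
      = U * (Matrix.diagonal (fun a : QIdx N => ∏ i, zd (a i) ^ (mi i : ℕ)) *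
          (List.ofFn fun i : Fin N => rotZ (θi i) i).reverse.prod) * V := by
  have hconj : ∀ A B : MatQ N, (U * A * V) * (U * B * V) = U * (A * B) * V := by
    intro A B
    have h : V * (U * (B * V)) = B * V := by rw [← mul_assoc, hVU, one_mul]
    simp only [mul_assoc, h]
  have hexp : ∀ (θ : ℝ) (i : Fin N),
      NormedSpace.exp (((θ : ℂ) * Complex.I) • (U * op1 Zg i * V)) = U * rotZ θ i * V := by
    intro θ i
    have hsm : ((θ : ℂ) * Complex.I) • (U * op1 Zg i * V)
        = U * (((θ : ℂ) * Complex.I) • op1 Zg i) * V := by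
      rw [mul_smul_comm, smul_mul_assoc]
    rw [hsm]
    exact Matrix.exp_units_conj ⟨U, V, hUV, hVU⟩ (((θ : ℂ) * Complex.I) • op1 Zg i)
  have hentry : ∀ i : Fin N,
      (U * op1 Zg i * V) ^ (mi i : ℕ) *
          NormedSpace.exp (((θi i : ℂ) * Complex.I) • (U * op1 Zg i * V))
        = U * ((op1 Zg i) ^ (mi i : ℕ) * rotZ (θi i) i) * V := by
    intro i
    rw [hexp]
    have hm : (mi i : ℕ) = 0 ∨ (mi i : ℕ) = 1 := by omega
    rcases hm with hm | hm
    · rw [hm, pow_zero, pow_zero, one_mul, one_mul]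
    · rw [hm, pow_one, pow_one, hconj]
  rw [show (List.ofFn fun i : Fin N =>
        (U * op1 Zg i * V) ^ (mi i : ℕ) *
          NormedSpace.exp (((θi i : ℂ) * Complex.I) • (U * op1 Zg i * V)))
      = List.ofFn (fun i : Fin N => U * ((op1 Zg i) ^ (mi i : ℕ) * rotZ (θi i) i) * V) from
    congrArg _ (funext hentry)]
  have hmap : List.ofFn (fun i : Fin N => U * ((op1 Zg i) ^ (mi i : ℕ) * rotZ (θi i) i) * V)
      = (List.ofFn fun i : Fin N => (op1 Zg i) ^ (mi i : ℕ) * rotZ (θi i) i).map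
          (fun A => U * A * V) := by
    rw [List.map_ofFn]
    rfl
  rw [hmap, ← List.map_reverse, conj_list_prod U V hUV hVU]
  have hdiag : ∀ i : Fin N, (op1 Zg i) ^ (mi i : ℕ) * rotZ (θi i) i
      = Matrix.diagonal (fun s : QIdx N =>
          zd (s i) ^ (mi i : ℕ) * NormedSpace.exp ((θi i : ℂ) * Complex.I * zd (s i))) := by
    intro i
    rw [Zg_eq_diagonal, op1_diagonal, Matrix.diagonal_pow, rotZ_diag,
      Matrix.diagonal_mul_diagonal]
    refine congrArg Matrix.diagonal (funext fun s => ?_)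
    simp [zd]
  have hinner : (List.ofFn fun i : Fin N => (op1 Zg i) ^ (mi i : ℕ) * rotZ (θi i) i).reverse.prod
      = Matrix.diagonal (fun a : QIdx N => ∏ i, zd (a i) ^ (mi i : ℕ)) *
          (List.ofFn fun i : Fin N => rotZ (θi i) i).reverse.prod := by
    rw [show (List.ofFn fun i : Fin N => (op1 Zg i) ^ (mi i : ℕ) * rotZ (θi i) i)
        = List.ofFn fun i : Fin N => Matrix.diagonal (fun s : QIdx N =>
            zd (s i) ^ (mi i : ℕ) * NormedSpace.exp ((θi i : ℂ) * Complex.I * zd (s i))) from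
      congrArg _ (funext hdiag)]
    rw [show (List.ofFn fun i : Fin N => rotZ (θi i) i)
        = List.ofFn fun i : Fin N => Matrix.diagonal (fun s : QIdx N =>
            NormedSpace.exp ((θi i : ℂ) * Complex.I * zd (s i))) from
      congrArg _ (funext fun i => rotZ_diag (θi i) i)]
    rw [revprod_ofFn_diag, revprod_ofFn_diag, Matrix.diagonal_mul_diagonal]
    refine congrArg Matrix.diagonal (funext fun s => ?_)
    rw [← Finset.prod_mul_distrib]
  rw [hinner]

end Aux

/-- Corollary 1: the composition of the uncorrected unit cells with
outcomes `m_i^j` equals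
`∏_{j=D,…,1} ∏_{i=N,…,1} (T^{e(j)} Z_i (T^{e(j)})†)^{m_i^j} · exp(iθ_i^j · T^{e(j)} Z_i (T^{e(j)})†)`
with `e(j) = (L - (j mod L) + 1) mod L`. Here `j : Fin D` stands for the mathematical
index `j+1 ∈ {1,…,D}`; products/compositions with the smallest index act first. -/
theorem mbqc_without_corrections {N L D : ℕ} (hL : 1 ≤ L) (T : MatQ N)
    (hT : T ∈ Matrix.unitaryGroup (QIdx N) ℂ) (hTL : T ^ L = 1) (hD : L ∣ D)
    (θ : Fin D → Fin N → ℝ) (m : Fin D → Fin N → Fin 2) (v : QIdx N → ℂ) :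
    (List.ofFn fun j : Fin D => fun w : QIdx N → ℂ =>
        ((Real.sqrt 2 : ℂ) ^ N) •
          contractIn (fun i => Matrix.vecMul braPlus (Zg ^ (m j i : ℕ)))
            ((UT T).mulVec (kronVec
              (((List.ofFn fun i : Fin N => rotZ (θ j i) i).reverse.prod).mulVec w)
              (ketPlusAll (Fin N))))).foldl (fun w f => f w) v =
      ((List.ofFn fun j : Fin D =>
        (List.ofFn fun i : Fin N =>
          (T ^ ((L - (((j : ℕ) + 1) % L) + 1) % L) * op1 Zg i *
              (T ^ ((L - (((j : ℕ) + 1) % L) + 1) % L))ᴴ) ^ (m j i : ℕ) *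
          NormedSpace.exp (((θ j i : ℂ) * Complex.I) •
            (T ^ ((L - (((j : ℕ) + 1) % L) + 1) % L) * op1 Zg i *
              (T ^ ((L - (((j : ℕ) + 1) % L) + 1) % L))ᴴ))).reverse.prod).reverse.prod).mulVec
        v := by
  classical
  have h1 : T * Tᴴ = 1 := by
    have := (Matrix.mem_unitaryGroup_iff).mp hT
    simpa [Matrix.star_eq_conjTranspose] using this
  have h2 : Tᴴ * T = 1 := by
    have := (Matrix.mem_unitaryGroup_iff').mp hT
    simpa [Matrix.star_eq_conjTranspose] using this
  -- the inverse-power identity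
  have hpow : ∀ j : ℕ, T ^ ((L - ((j + 1) % L) + 1) % L) = (T ^ j)ᴴ := by
    intro j
    set r := (j + 1) % L with hr
    have hrL : r < L := Nat.mod_lt _ (by omega)
    have hdvd : L ∣ (L - r + 1) % L + j := by
      have e1 : (L - r + 1) % L + j ≡ (L - r + 1) + j [MOD L] :=
        Nat.ModEq.add_right j (Nat.mod_modEq _ L)
      have e2 : (L - r + 1) + j + (j + 1) ≡ (L - r + 1) + j + r [MOD L] :=
        Nat.ModEq.add_left _ (Nat.mod_modEq (j + 1) L).symm
      have e3 : (L - r + 1) + j + r = L + (j + 1) := by omega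
      have e4 : (L - r + 1) + j + r ≡ 0 + (j + 1) [MOD L] := by
        rw [e3]
        exact Nat.ModEq.add_right _ ((Nat.modEq_zero_iff_dvd).mpr ⟨1, by omega⟩)
      have e5 : (L - r + 1) % L + j + (j + 1) ≡ 0 + (j + 1) [MOD L] :=
        (e1.add_right (j + 1)).trans (e2.trans e4)
      exact (Nat.modEq_zero_iff_dvd).mp (Nat.ModEq.add_right_cancel' (j + 1) e5)
    obtain ⟨k, hk⟩ := hdvd
    have hTek : T ^ ((L - r + 1) % L) * T ^ j = 1 := by
      rw [← pow_add, hk, pow_mul, hTL, one_pow]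
    have hj := pow_unitary T h1 h2 j
    calc T ^ ((L - r + 1) % L)
        = T ^ ((L - r + 1) % L) * (T ^ j * (T ^ j)ᴴ) := by rw [hj.1, mul_one]
      _ = (T ^ j)ᴴ := by rw [← mul_assoc, hTek, one_mul]
  set Rm : Fin D → MatQ N :=
    fun j => (List.ofFn fun i : Fin N => rotZ (θ j i) i).reverse.prod with hRm
  set Dm : Fin D → MatQ N :=
    fun j => Matrix.diagonal (fun a : QIdx N => ∏ i, zd (a i) ^ (m j i : ℕ)) with hDm
  set Afun : ℕ → MatQ N :=
    (fun n => if h : n < D then Dm ⟨n, h⟩ * Rm ⟨n, h⟩ else 1) with hAfun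
  have hAj : ∀ j : Fin D, Afun (j : ℕ) = Dm j * Rm j := by
    intro j
    rw [hAfun]
    simp [j.isLt]
  -- left-hand side
  have hL1 : (List.ofFn fun j : Fin D => fun w : QIdx N → ℂ =>
        ((Real.sqrt 2 : ℂ) ^ N) •
          contractIn (fun i => Matrix.vecMul braPlus (Zg ^ (m j i : ℕ)))
            ((UT T).mulVec (kronVec
              (((List.ofFn fun i : Fin N => rotZ (θ j i) i).reverse.prod).mulVec w)
              (ketPlusAll (Fin N)))))
      = (List.ofFn fun j : Fin D => T * Afun (j : ℕ)).map
          (fun C => fun w : QIdx N → ℂ => C.mulVec w) := by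
    rw [List.map_ofFn]
    refine congrArg _ (funext fun j => funext fun w => ?_)
    show ((Real.sqrt 2 : ℂ) ^ N) •
          contractIn (fun i => Matrix.vecMul braPlus (Zg ^ (m j i : ℕ)))
            ((UT T).mulVec (kronVec ((Rm j).mulVec w) (ketPlusAll (Fin N))))
        = (T * Afun (j : ℕ)).mulVec w
    rw [cell T (m j) ((Rm j).mulVec w), Matrix.mulVec_mulVec, hAj j, ← mul_assoc]
  rw [hL1, foldl_mulVec]
  -- right-hand side
  have hR1 : (List.ofFn fun j : Fin D =>
        (List.ofFn fun i : Fin N =>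
          (T ^ ((L - (((j : ℕ) + 1) % L) + 1) % L) * op1 Zg i *
              (T ^ ((L - (((j : ℕ) + 1) % L) + 1) % L))ᴴ) ^ (m j i : ℕ) *
          NormedSpace.exp (((θ j i : ℂ) * Complex.I) •
            (T ^ ((L - (((j : ℕ) + 1) % L) + 1) % L) * op1 Zg i *
              (T ^ ((L - (((j : ℕ) + 1) % L) + 1) % L))ᴴ))).reverse.prod)
      = List.ofFn fun j : Fin D =>
          (T ^ (j : ℕ))ᴴ * Afun (j : ℕ) * T ^ (j : ℕ) := by
    refine congrArg _ (funext fun j => ?_)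
    set U := T ^ ((L - (((j : ℕ) + 1) % L) + 1) % L) with hU
    have hUu := pow_unitary T h1 h2 ((L - (((j : ℕ) + 1) % L) + 1) % L)
    rw [rhs_j U Uᴴ hUu.1 hUu.2 (θ j) (m j), hAj j]
    rw [hU, hpow (j : ℕ), Matrix.conjTranspose_conjTranspose]
  rw [hR1, telescope T h1 h2 D Afun]
  obtain ⟨c, rfl⟩ := hD
  rw [pow_mul, hTL, one_pow, Matrix.conjTranspose_one, one_mul]

end QCA

end
end

section
/- Theorem 3 specialized to the cluster CQCA T_c (the resource state is the 2D cluster state): let N ≥ 3, D ≥ 2, and arrange N(D+1) qubits in columns j = 1,…,D+1, each column a ring of N qubits (row indices mod N). Let |Ψ⟩ := (∏_{j=D,…,1} U_{T_c}^{(j,j+1)}) |+⟩^{⊗N(D+1)}, where U_{T_c}^{(j,j+1)} is the unitary U_T with T = T_c acting on columns j (as input) and j+1 (as output), applied from right to left in order j = 1,…,D. Then |Ψ⟩ is a +1 eigenvector of: (i) the bulk stabilizers Z_i^{(j)} X_i^{(j+1)} Z_{i-1}^{(j+1)} Z_{i+1}^{(j+1)} Z_i^{(j+2)} for all i = 1,…,N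 and j = 1,…,D−1; (ii) the left-boundary stabilizers X_i^{(1)} Z_{i-1}^{(1)} Z_{i+1}^{(1)} Z_i^{(2)} for all i; and (iii) the right-boundary stabilizers Z_i^{(D)} X_i^{(D+1)} for all i — i.e. |Ψ⟩ is the cluster state on the N × (D+1) square lattice with periodic boundary conditions along the columns. -/
open Matrix Complex
open scoped Kronecker Classical

noncomputable section

namespace QCA

variable {ι : Type*} [Fintype ι] [DecidableEq ι]

/-- Sites of an `N × (D+1)` grid of qubits: row `i : Fin N`, column `j : Fin (D+1)`. -/
abbrev GIdx (N D : ℕ) := Fin N × Fin (D + 1)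

/-- Operators on the grid of `N × (D+1)` qubits. -/
abbrev MatG (N D : ℕ) := Matrix (GIdx N D → Fin 2) (GIdx N D → Fin 2) ℂ

/-- The cluster CQCA `T_c` acting on column `j` of the grid (row indices mod `N`). -/
def TcCol {N D : ℕ} [NeZero N] (j : Fin (D + 1)) : MatG N D :=
  (List.ofFn fun i : Fin N => op1 Hg ((i, j) : GIdx N D)).prod *
    (List.ofFn fun i : Fin N => cz2 ((i, j) : GIdx N D) ((i + 1, j) : GIdx N D)).prod

/-- The unitary `U_{T_c}^{(j,j+1)}` acting on columns `j` (input) and `j+1` (output). -/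
def UTcPair {N D : ℕ} [NeZero N] (j : Fin D) : MatG N D :=
  TcCol j.succ *
    (List.ofFn fun i : Fin N => op1 Hg ((i, j.succ) : GIdx N D)).prod *
    (List.ofFn fun i : Fin N => cz2 ((i, j.castSucc) : GIdx N D) ((i, j.succ) : GIdx N D)).prod

/-- The resource state `|Ψ⟩ = (∏_{j=D,…,1} U_{T_c}^{(j,j+1)}) |+⟩^{⊗N(D+1)}`
(applied from right to left in order `j = 1,…,D`). -/
def clusterState (N D : ℕ) [NeZero N] : (GIdx N D → Fin 2) → ℂ :=
  ((List.ofFn fun j : Fin D => UTcPair (N := N) (D := D) j).reverse.prod).mulVec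
    (ketPlusAll (GIdx N D))

-- PART 1: generic toolkit
section Toolkit

lemma fin2_cases (x : Fin 2) : x = 0 ∨ x = 1 := by omega

lemma Hg_mul_Xg : Hg * Xg = Zg * Hg := by
  ext i j
  fin_cases i <;> fin_cases j <;>
    simp [Hg, Xg, Zg, Matrix.mul_apply, Fin.sum_univ_two, Matrix.smul_apply] <;> ring

lemma Hg_mul_Zg : Hg * Zg = Xg * Hg := by
  ext i j
  fin_cases i <;> fin_cases j <;>
    simp [Hg, Xg, Zg, Matrix.mul_apply, Fin.sum_univ_two, Matrix.smul_apply] <;> ring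

lemma Zg_mul_Zg : Zg * Zg = 1 := by
  ext i j
  fin_cases i <;> fin_cases j <;>
    simp [Zg, Matrix.mul_apply, Fin.sum_univ_two, Matrix.one_apply]

lemma Xg_row_sum (a : Fin 2) : ∑ x, Xg a x = 1 := by
  rcases fin2_cases a with h | h <;> subst h <;> simp [Xg, Fin.sum_univ_two]

variable {ι : Type*} [Fintype ι] [DecidableEq ι]

lemma op1_apply (P : Matrix (Fin 2) (Fin 2) ℂ) (v : ι) (s t : ι → Fin 2) :
    op1 P v s t = ∏ j, (if j = v then P (s j) (t j) else if s j = t j then 1 else 0) := by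
  rw [← Finset.mul_prod_erase (Finset.univ) _ (Finset.mem_univ v)]
  unfold op1
  rw [if_pos rfl]
  congr 1
  refine Finset.prod_congr rfl fun j hj => ?_
  rw [if_neg (Finset.mem_erase.mp hj).1]

lemma mul_op1_apply (P Q : Matrix (Fin 2) (Fin 2) ℂ) (v w : ι) (s t : ι → Fin 2) :
    (op1 P v * op1 Q w) s t =
      ∏ j, ∑ x : Fin 2, ((if j = v then P (s j) x else if s j = x then 1 else 0) *
        (if j = w then Q x (t j) else if x = t j then 1 else 0)) := by
  rw [Matrix.mul_apply, Fintype.prod_sum]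
  refine Finset.sum_congr rfl fun u _ => ?_
  rw [op1_apply, op1_apply, ← Finset.prod_mul_distrib]

lemma sum_fin2_delta_right (b : Fin 2) (f : Fin 2 → ℂ) :
    ∑ x : Fin 2, f x * (if x = b then 1 else 0) = f b := by
  rcases fin2_cases b with h | h <;> subst h <;>
    simp [Fin.sum_univ_two]

lemma sum_fin2_delta_left (a : Fin 2) (f : Fin 2 → ℂ) :
    ∑ x : Fin 2, (if a = x then 1 else 0) * f x = f a := by
  rcases fin2_cases a with h | h <;> subst h <;>
    simp [Fin.sum_univ_two]

lemma op1_mul_same (P Q : Matrix (Fin 2) (Fin 2) ℂ) (v : ι) :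
    op1 P v * op1 Q v = op1 (P * Q) v := by
  ext s t
  rw [mul_op1_apply, op1_apply]
  refine Finset.prod_congr rfl fun j _ => ?_
  by_cases h : j = v
  · subst h
    simp [Matrix.mul_apply]
  · simp only [if_neg h]
    rcases fin2_cases (s j) with h1 | h1 <;> rcases fin2_cases (t j) with h2 | h2 <;>
      rw [h1, h2] <;> simp [Fin.sum_univ_two]

lemma op1_comm_ne (P Q : Matrix (Fin 2) (Fin 2) ℂ) {v w : ι} (hvw : v ≠ w) :
    op1 P v * op1 Q w = op1 Q w * op1 P v := by
  ext s t
  rw [mul_op1_apply, mul_op1_apply]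
  refine Finset.prod_congr rfl fun j _ => ?_
  by_cases hv : j = v
  · subst hv
    simp only [if_neg hvw, if_pos rfl]
    rcases fin2_cases (s j) with h1 | h1 <;> rcases fin2_cases (t j) with h2 | h2 <;>
      rw [h1, h2] <;> simp [Fin.sum_univ_two]
  · by_cases hw : j = w
    · subst hw
      simp only [if_neg hv, if_pos rfl]
      rcases fin2_cases (s j) with h1 | h1 <;> rcases fin2_cases (t j) with h2 | h2 <;>
        rw [h1, h2] <;> simp [Fin.sum_univ_two]
    · simp only [if_neg hv, if_neg hw]

lemma op1_op1_comm (P Q : Matrix (Fin 2) (Fin 2) ℂ) {v w : ι} (h : v ≠ w) :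
    Commute (op1 P v) (op1 Q w) := op1_comm_ne P Q h

lemma op1_one (v : ι) : op1 (1 : Matrix (Fin 2) (Fin 2) ℂ) v = 1 := by
  rw [← Matrix.diagonal_one, op1_diagonal, ← Matrix.diagonal_one]

lemma Z_mul_Z_self (v : ι) :
    op1 Zg v * op1 Zg v = (1 : Matrix (ι → Fin 2) (ι → Fin 2) ℂ) := by
  rw [op1_mul_same, Zg_mul_Zg, op1_one]

/-- `zf` is the diagonal of the Pauli Z. -/
def zf : Fin 2 → ℂ := ![1, -1]

lemma op1_Zg_eq (v : ι) : op1 Zg v = Matrix.diagonal (fun s => zf (s v)) := by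
  rw [Zg_eq_diagonal, op1_diagonal]; rfl

lemma Z_comm_diag (v : ι) (d : (ι → Fin 2) → ℂ) :
    Commute (op1 Zg v) (Matrix.diagonal d) := by
  rw [op1_Zg_eq]; exact diagonal_commute _ _

end Toolkit

-- PART 2: pushes and chains
section Toolkit2

variable {ι : Type*} [Fintype ι] [DecidableEq ι]

lemma op1X_ne_zero {v : ι} {s t : ι → Fin 2} (h : op1 Xg v s t ≠ 0) :
    t = Function.update s v (s v + 1) := by
  unfold op1 at h
  have h1 : Xg (s v) (t v) ≠ 0 := left_ne_zero_of_mul h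
  have h2 := right_ne_zero_of_mul h
  rw [Finset.prod_ne_zero_iff] at h2
  funext j
  by_cases hj : j = v
  · subst hj
    rw [Function.update_self]
    rcases fin2_cases (s j) with ha | ha <;> rcases fin2_cases (t j) with hb | hb <;>
        rw [ha, hb] <;> rw [ha, hb] at h1 <;> first
      | rfl
      | (exfalso; apply h1; simp [Xg])
  · rw [Function.update_of_ne hj]
    have := h2 j (Finset.mem_erase.mpr ⟨hj, Finset.mem_univ j⟩)
    by_contra hne
    rw [if_neg (fun he => hne he.symm)] at this
    exact this rfl

lemma X_mul_diagonal (v : ι) (d : (ι → Fin 2) → ℂ) :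
    op1 Xg v * Matrix.diagonal d =
      Matrix.diagonal (fun s => d (Function.update s v (s v + 1))) * op1 Xg v := by
  ext s t
  rw [Matrix.mul_diagonal, Matrix.diagonal_mul]
  by_cases h : op1 Xg v s t = 0
  · rw [h, zero_mul, mul_zero]
  · rw [op1X_ne_zero h, mul_comm]

lemma X_push_diag (v : ι) (d q : (ι → Fin 2) → ℂ)
    (hq : ∀ s, d (Function.update s v (s v + 1)) = d s * q s) :
    op1 Xg v * Matrix.diagonal d = Matrix.diagonal d * (Matrix.diagonal q * op1 Xg v) := by
  rw [X_mul_diagonal]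
  have : (fun s => d (Function.update s v (s v + 1))) = fun s => d s * q s := funext hq
  rw [this, ← Matrix.diagonal_mul_diagonal, mul_assoc]

lemma X_comm_diag (v : ι) (d : (ι → Fin 2) → ℂ)
    (h : ∀ s, d (Function.update s v (s v + 1)) = d s) :
    Commute (op1 Xg v) (Matrix.diagonal d) := by
  unfold Commute SemiconjBy
  rw [X_mul_diagonal]
  have : (fun s => d (Function.update s v (s v + 1))) = d := funext h
  rw [this]

lemma prod_ofFn_diagonal {n : ℕ} (d : Fin n → (ι → Fin 2) → ℂ) :
    (List.ofFn fun i => Matrix.diagonal (d i)).prod =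
      Matrix.diagonal (fun s => ∏ i, d i s) := by
  induction n with
  | zero => simp [List.ofFn_zero, ← Matrix.diagonal_one]
  | succ n ih =>
      rw [List.ofFn_succ, List.prod_cons, ih (fun i => d i.succ),
        Matrix.diagonal_mul_diagonal]
      have : (fun s => d 0 s * ∏ i : Fin n, d i.succ s)
          = fun s => ∏ i : Fin (n + 1), d i s := by
        funext s
        exact (Fin.prod_univ_succ (fun i => d i s)).symm
      rw [this]

lemma commute_ofFn_prod {M : Type*} [Monoid M] {n : ℕ} (g : Fin n → M) (a : M)
    (h : ∀ i, Commute a (g i)) : Commute a (List.ofFn g).prod := by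
  refine Commute.list_prod_right _ _ fun x hx => ?_
  obtain ⟨i, rfl⟩ := List.mem_ofFn.mp hx
  exact h i

lemma push_ofFn_single {M : Type*} [Monoid M] : ∀ {n : ℕ} (g : Fin n → M) (S S' : M)
    (i₀ : Fin n), S * g i₀ = g i₀ * S' → (∀ i, i ≠ i₀ → Commute S (g i)) →
    (∀ i, i ≠ i₀ → Commute S' (g i)) →
    S * (List.ofFn g).prod = (List.ofFn g).prod * S' := by
  intro n
  induction n with
  | zero => exact fun g S S' i₀ => i₀.elim0
  | succ n ih =>
      intro g S S' i₀ h0 hS hS'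
      rw [List.ofFn_succ, List.prod_cons]
      rcases Fin.eq_zero_or_eq_succ i₀ with rfl | ⟨j, rfl⟩
      · have hco : Commute S' (List.ofFn fun i => g i.succ).prod :=
          commute_ofFn_prod _ _ fun i => hS' i.succ (Fin.succ_ne_zero i)
        rw [← mul_assoc, h0, mul_assoc, hco.eq, ← mul_assoc]
      · have hc : Commute S (g 0) := hS 0 (Ne.symm (Fin.succ_ne_zero j))
        have key := ih (fun i => g i.succ) S S' j h0
          (fun i hi => hS i.succ (by simpa using hi))
          (fun i hi => hS' i.succ (by simpa using hi))
        rw [← mul_assoc, hc.eq, mul_assoc, key, ← mul_assoc]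

lemma push_mul {M : Type*} [Monoid M] {S₁ S₂ T₁ T₂ L : M}
    (h1 : S₁ * L = L * T₁) (h2 : S₂ * L = L * T₂) :
    (S₁ * S₂) * L = L * (T₁ * T₂) := by
  rw [mul_assoc, h2, ← mul_assoc, h1, mul_assoc]

lemma pushl {M : Type*} [Monoid M] {S A S' : M} (h : S * A = A * S') (x : M) :
    S * (A * x) = A * (S' * x) := by
  rw [← mul_assoc, h, mul_assoc]

lemma comm3 {M : Type*} [Monoid M] {a b : M} (h : Commute a b) (c : M) :
    a * (b * c) = b * (a * c) := by
  rw [← mul_assoc, h.eq, mul_assoc]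

lemma push_chain {M : Type*} [Monoid M] : ∀ {n : ℕ} (g : Fin n → M) (P : Fin (n + 1) → M),
    (∀ k : Fin n, P k.succ * g k = g k * P k.castSucc) →
    P (Fin.last n) * (List.ofFn g).reverse.prod = (List.ofFn g).reverse.prod * P 0 := by
  intro n
  induction n with
  | zero => intro g P h; simp
  | succ n ih =>
      intro g P h
      rw [List.ofFn_succ, List.reverse_cons, List.prod_append, List.prod_cons, List.prod_nil,
        mul_one]
      have key := ih (fun i => g i.succ) (fun m => P m.succ) (fun k => by
        simpa only [Fin.succ_castSucc] using h k.succ)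
      have key' : P (Fin.last (n + 1)) * (List.ofFn fun i => g i.succ).reverse.prod =
          (List.ofFn fun i => g i.succ).reverse.prod * P (Fin.succ 0) := key
      have h0 : P (Fin.succ 0) * g 0 = g 0 * P 0 := by simpa using h 0
      rw [← mul_assoc, key', mul_assoc, h0, ← mul_assoc]

lemma sum_op1_row (P : Matrix (Fin 2) (Fin 2) ℂ) (v : ι) (s : ι → Fin 2) :
    ∑ t : ι → Fin 2, op1 P v s t = ∑ x : Fin 2, P (s v) x := by
  have hps := (Fintype.prod_sum
    (fun j (x : Fin 2) => if j = v then P (s j) x else if s j = x then 1 else 0)).symm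
  calc ∑ t : ι → Fin 2, op1 P v s t
      = ∑ t : ι → Fin 2, ∏ j, (if j = v then P (s j) (t j) else if s j = t j then 1 else 0) :=
        Finset.sum_congr rfl fun t _ => op1_apply P v s t
    _ = ∏ j, ∑ x : Fin 2, (if j = v then P (s j) x else if s j = x then 1 else 0) := hps
    _ = ∑ x : Fin 2, P (s v) x := by
        rw [← Finset.mul_prod_erase (Finset.univ)
          (fun j => ∑ x : Fin 2, if j = v then P (s j) x else if s j = x then 1 else 0)
          (Finset.mem_univ v)]
        simp only [eq_self_iff_true, if_true]
        have hone : ∀ j ∈ Finset.univ.erase v,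
            (∑ x : Fin 2, if j = v then P (s j) x else if s j = x then 1 else 0) = 1 := by
          intro j hj
          have hjv := (Finset.mem_erase.mp hj).1
          simp only [if_neg hjv]
          rcases fin2_cases (s j) with h1 | h1 <;> rw [h1] <;> simp [Fin.sum_univ_two]
        rw [Finset.prod_congr rfl hone, Finset.prod_const_one, mul_one]

lemma X_mulVec_ketPlusAll (v : ι) :
    (op1 Xg v).mulVec (ketPlusAll ι) = ketPlusAll ι := by
  funext s
  have hconst : ∀ t : ι → Fin 2, ketPlusAll ι t = ((Real.sqrt 2 : ℂ))⁻¹ ^ Fintype.card ι := by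
    intro t
    unfold ketPlusAll ketPlus
    rw [Finset.prod_const, Finset.card_univ]
  rw [Matrix.mulVec, hconst s]
  unfold dotProduct
  calc ∑ t, op1 Xg v s t * ketPlusAll ι t
      = ∑ t, op1 Xg v s t * ((Real.sqrt 2 : ℂ))⁻¹ ^ Fintype.card ι := by
        refine Finset.sum_congr rfl fun t _ => by rw [hconst t]
    _ = (∑ t, op1 Xg v s t) * ((Real.sqrt 2 : ℂ))⁻¹ ^ Fintype.card ι := by
        rw [Finset.sum_mul]
    _ = ((Real.sqrt 2 : ℂ))⁻¹ ^ Fintype.card ι := by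
        rw [sum_op1_row, Xg_row_sum, one_mul]

end Toolkit2

-- PART 3: grid layers
section Grid

variable {N D : ℕ} [NeZero N]

/-- Hadamard layer on column `c`. -/
abbrev HL (N : ℕ) [NeZero N] (D : ℕ) (c : Fin (D + 1)) : MatG N D :=
  (List.ofFn fun i : Fin N => op1 Hg ((i, c) : GIdx N D)).prod

/-- CZ-ring layer on column `c`. -/
abbrev CZr (N : ℕ) [NeZero N] (D : ℕ) (c : Fin (D + 1)) : MatG N D :=
  (List.ofFn fun i : Fin N => cz2 ((i, c) : GIdx N D) ((i + 1, c) : GIdx N D)).prod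

/-- vertical CZ layer between columns `j` and `j+1`. -/
abbrev CZv (N : ℕ) [NeZero N] (D : ℕ) (j : Fin D) : MatG N D :=
  (List.ofFn fun i : Fin N => cz2 ((i, j.castSucc) : GIdx N D) ((i, j.succ) : GIdx N D)).prod

lemma UTcPair_eq (j : Fin D) :
    UTcPair (N := N) (D := D) j = HL N D j.succ * CZr N D j.succ * HL N D j.succ * CZv N D j := rfl

/-- diagonal entries of CZ. -/
def czf : Fin 2 → Fin 2 → ℂ := fun a b => if a = 1 ∧ b = 1 then -1 else 1

lemma CZr_diag (c : Fin (D + 1)) :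
    CZr N D c = Matrix.diagonal (fun s => ∏ k : Fin N, czf (s (k, c)) (s (k + 1, c))) :=
  prod_ofFn_diagonal fun k s => czf (s (k, c)) (s (k + 1, c))

lemma CZv_diag (j : Fin D) :
    CZv N D j = Matrix.diagonal (fun s => ∏ k : Fin N, czf (s (k, j.castSucc)) (s (k, j.succ))) :=
  prod_ofFn_diagonal fun k s => czf (s (k, j.castSucc)) (s (k, j.succ))

lemma site_ne_row {a b : Fin N} {c c' : Fin (D + 1)} (h : a ≠ b) :
    ((a, c) : GIdx N D) ≠ (b, c') := fun he => h (congrArg Prod.fst he)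

lemma site_ne_col {a b : Fin N} {c c' : Fin (D + 1)} (h : c ≠ c') :
    ((a, c) : GIdx N D) ≠ (b, c') := fun he => h (congrArg Prod.snd he)

lemma fin_one_ne_zero (hN : 3 ≤ N) : (1 : Fin N) ≠ 0 := by
  intro h
  have := congrArg Fin.val h
  rw [Fin.val_one'] at this
  rw [Nat.mod_eq_of_lt (by omega)] at this
  simp at this

lemma fin_two_ne_zero (hN : 3 ≤ N) : (1 : Fin N) + 1 ≠ 0 := by
  intro h
  have := congrArg Fin.val h
  rw [Fin.val_add, Fin.val_one', Nat.mod_eq_of_lt (show 1 < N by omega),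
    Nat.mod_eq_of_lt (show 1 + 1 < N by omega)] at this
  simp at this

lemma row_sub_ne (hN : 3 ≤ N) (i : Fin N) : i - 1 ≠ i := fun h =>
  fin_one_ne_zero hN (sub_eq_self.mp h)

lemma row_add_ne (hN : 3 ≤ N) (i : Fin N) : i + 1 ≠ i := fun h =>
  fin_one_ne_zero hN (left_eq_add.mp h.symm)

lemma row_sub_ne_add (hN : 3 ≤ N) (i : Fin N) : i - 1 ≠ i + 1 := by
  intro h
  have h2 := sub_eq_iff_eq_add.mp h
  rw [add_assoc] at h2
  exact fin_two_ne_zero hN (left_eq_add.mp h2)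

lemma fin2_zero_add_one : (0 : Fin 2) + 1 = 1 := rfl
lemma fin2_one_add_one : (1 : Fin 2) + 1 = 0 := rfl

lemma col_cs_ne_sc (j : Fin D) : (j.castSucc : Fin (D + 1)) ≠ j.succ := by
  intro h
  have := congrArg Fin.val h
  simp [Fin.coe_castSucc, Fin.val_succ] at this

-- Hadamard layer pushes
lemma push_HL {P Q : Matrix (Fin 2) (Fin 2) ℂ} (hPQ : P * Hg = Hg * Q) (i : Fin N)
    (c : Fin (D + 1)) :
    op1 P ((i, c) : GIdx N D) * HL N D c = HL N D c * op1 Q ((i, c) : GIdx N D) := by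
  refine push_ofFn_single (fun k : Fin N => op1 Hg ((k, c) : GIdx N D)) _ _ i ?_ ?_ ?_
  · rw [op1_mul_same, hPQ, ← op1_mul_same]
  · exact fun k hk => op1_op1_comm _ _ (site_ne_row fun h => hk h.symm)
  · exact fun k hk => op1_op1_comm _ _ (site_ne_row fun h => hk h.symm)

lemma X_hl (i : Fin N) (c : Fin (D + 1)) :
    op1 Xg ((i, c) : GIdx N D) * HL N D c = HL N D c * op1 Zg ((i, c) : GIdx N D) :=
  push_HL Hg_mul_Zg.symm i c

lemma Z_hl (i : Fin N) (c : Fin (D + 1)) :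
    op1 Zg ((i, c) : GIdx N D) * HL N D c = HL N D c * op1 Xg ((i, c) : GIdx N D) :=
  push_HL Hg_mul_Xg.symm i c

lemma comm_HL (P : Matrix (Fin 2) (Fin 2) ℂ) (v : GIdx N D) (c : Fin (D + 1)) (h : v.2 ≠ c) :
    Commute (op1 P v) (HL N D c) :=
  commute_ofFn_prod _ _ fun k => op1_op1_comm _ _ (fun he => h (by rw [he]))

lemma Z_comm_CZr (v : GIdx N D) (c : Fin (D + 1)) : Commute (op1 Zg v) (CZr N D c) := by
  rw [CZr_diag]; exact Z_comm_diag _ _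

lemma Z_comm_CZv (v : GIdx N D) (j : Fin D) : Commute (op1 Zg v) (CZv N D j) := by
  rw [CZv_diag]; exact Z_comm_diag _ _

lemma X_comm_CZr (v : GIdx N D) (c : Fin (D + 1)) (h : v.2 ≠ c) :
    Commute (op1 Xg v) (CZr N D c) := by
  rw [CZr_diag]
  refine X_comm_diag _ _ fun s => Finset.prod_congr rfl fun k _ => ?_
  rw [Function.update_of_ne (fun he => h (by rw [← he])),
    Function.update_of_ne (fun he => h (by rw [← he]))]

lemma X_comm_CZv (v : GIdx N D) (j : Fin D) (h1 : v.2 ≠ j.castSucc) (h2 : v.2 ≠ j.succ) :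
    Commute (op1 Xg v) (CZv N D j) := by
  rw [CZv_diag]
  refine X_comm_diag _ _ fun s => Finset.prod_congr rfl fun k _ => ?_
  rw [Function.update_of_ne (fun he => h1 (by rw [← he])),
    Function.update_of_ne (fun he => h2 (by rw [← he]))]

-- Fin 2 bit identities
lemma czf_flip_right (a b : Fin 2) : czf a (b + 1) = czf a b * zf a := by
  rcases fin2_cases a with h1 | h1 <;> rcases fin2_cases b with h2 | h2 <;>
    rw [h1, h2] <;>
    simp [fin2_zero_add_one, fin2_one_add_one, czf, zf] <;> norm_num

lemma czf_flip_left (a b : Fin 2) : czf (a + 1) b = czf a b * zf b := by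
  rcases fin2_cases a with h1 | h1 <;> rcases fin2_cases b with h2 | h2 <;>
    rw [h1, h2] <;>
    simp [fin2_zero_add_one, fin2_one_add_one, czf, zf] <;> norm_num

lemma ZZ_diag (v w : GIdx N D) :
    op1 Zg v * op1 Zg w =
      Matrix.diagonal (fun s : GIdx N D → Fin 2 => zf (s v) * zf (s w)) := by
  rw [op1_Zg_eq, op1_Zg_eq, Matrix.diagonal_mul_diagonal]

lemma X_push_CZr (hN : 3 ≤ N) (i : Fin N) (c : Fin (D + 1)) :
    op1 Xg ((i, c) : GIdx N D) * CZr N D c =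
      CZr N D c * ((op1 Zg ((i - 1, c) : GIdx N D) * op1 Zg ((i + 1, c) : GIdx N D)) *
        op1 Xg ((i, c) : GIdx N D)) := by
  rw [CZr_diag, ZZ_diag]
  refine X_push_diag _ _ _ fun s => ?_
  set v : GIdx N D := (i, c) with hv
  set s' := Function.update s v (s v + 1) with hs'
  have key : ∀ k : Fin N, czf (s' (k, c)) (s' (k + 1, c)) =
      czf (s (k, c)) (s (k + 1, c)) *
        (if k = i - 1 then zf (s (i - 1, c)) else if k = i then zf (s (i + 1, c)) else 1) := by
    intro k
    by_cases hk1 : k = i - 1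
    · subst hk1
      have hki : i - 1 ≠ i := row_sub_ne hN i
      have hkk : i - 1 + 1 = i := sub_add_cancel i 1
      rw [if_pos rfl, hkk, hs', Function.update_of_ne (site_ne_row hki), Function.update_self]
      exact czf_flip_right _ _
    · by_cases hk2 : k = i
      · subst hk2
        have hki : k + 1 ≠ k := row_add_ne hN k
        rw [if_neg hk1, if_pos rfl, hs', Function.update_self,
          Function.update_of_ne (site_ne_row hki)]
        exact czf_flip_left _ _
      · have hk3 : k + 1 ≠ i := fun h => hk1 (eq_sub_iff_add_eq.mpr h)
        rw [if_neg hk1, if_neg hk2, mul_one, hs',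
          Function.update_of_ne (site_ne_row hk2), Function.update_of_ne (site_ne_row hk3)]
  rw [Finset.prod_congr rfl fun k _ => key k, Finset.prod_mul_distrib]
  congr 1
  have hsub : ({i - 1, i} : Finset (Fin N)) ⊆ Finset.univ := Finset.subset_univ _
  rw [← Finset.prod_subset hsub (fun x _ hx => by
    rw [Finset.mem_insert, Finset.mem_singleton] at hx
    push_neg at hx
    rw [if_neg hx.1, if_neg hx.2])]
  rw [Finset.prod_pair (row_sub_ne hN i)]
  rw [if_pos rfl, if_neg (Ne.symm (row_sub_ne hN i)), if_pos rfl]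

lemma Xin_push_CZv (i : Fin N) (j : Fin D) :
    op1 Xg ((i, j.castSucc) : GIdx N D) * CZv N D j =
      CZv N D j * (op1 Zg ((i, j.succ) : GIdx N D) * op1 Xg ((i, j.castSucc) : GIdx N D)) := by
  rw [CZv_diag, op1_Zg_eq]
  refine X_push_diag _ _ _ fun s => ?_
  set v : GIdx N D := (i, j.castSucc) with hv
  set s' := Function.update s v (s v + 1) with hs'
  have key : ∀ k : Fin N, czf (s' (k, j.castSucc)) (s' (k, j.succ)) =
      czf (s (k, j.castSucc)) (s (k, j.succ)) *
        (if k = i then zf (s (i, j.succ)) else 1) := by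
    intro k
    by_cases hk : k = i
    · subst hk
      rw [if_pos rfl, hs', Function.update_self,
        Function.update_of_ne (site_ne_col (Ne.symm (col_cs_ne_sc j)))]
      exact czf_flip_left _ _
    · rw [if_neg hk, mul_one, hs', Function.update_of_ne (site_ne_row hk),
        Function.update_of_ne (site_ne_row hk)]
  rw [Finset.prod_congr rfl fun k _ => key k, Finset.prod_mul_distrib]
  congr 1
  rw [Finset.prod_eq_single i (fun b _ hb => by rw [if_neg hb]) (by simp), if_pos rfl]

lemma Xout_push_CZv (i : Fin N) (j : Fin D) :
    op1 Xg ((i, j.succ) : GIdx N D) * CZv N D j =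
      CZv N D j * (op1 Zg ((i, j.castSucc) : GIdx N D) * op1 Xg ((i, j.succ) : GIdx N D)) := by
  rw [CZv_diag, op1_Zg_eq]
  refine X_push_diag _ _ _ fun s => ?_
  set v : GIdx N D := (i, j.succ) with hv
  set s' := Function.update s v (s v + 1) with hs'
  have key : ∀ k : Fin N, czf (s' (k, j.castSucc)) (s' (k, j.succ)) =
      czf (s (k, j.castSucc)) (s (k, j.succ)) *
        (if k = i then zf (s (i, j.castSucc)) else 1) := by
    intro k
    by_cases hk : k = i
    · subst hk
      rw [if_pos rfl, hs', Function.update_self,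
        Function.update_of_ne (site_ne_col (col_cs_ne_sc j))]
      exact czf_flip_right _ _
    · rw [if_neg hk, mul_one, hs', Function.update_of_ne (site_ne_row hk),
        Function.update_of_ne (site_ne_row hk)]
  rw [Finset.prod_congr rfl fun k _ => key k, Finset.prod_mul_distrib]
  congr 1
  rw [Finset.prod_eq_single i (fun b _ hb => by rw [if_neg hb]) (by simp), if_pos rfl]

lemma Zcancel (v : GIdx N D) (x : MatG N D) : op1 Zg v * (op1 Zg v * x) = x := by
  rw [← mul_assoc, Z_mul_Z_self, one_mul]

lemma chain4 {M : Type*} [Monoid M] {S T1 T2 T3 T4 A B C E : M}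
    (e1 : S * A = A * T1) (e2 : T1 * B = B * T2) (e3 : T2 * C = C * T3)
    (e4 : T3 * E = E * T4) :
    S * (A * B * C * E) = (A * B * C * E) * T4 := by
  have hU : A * B * C * E = A * (B * (C * E)) := by rw [mul_assoc, mul_assoc]
  rw [hU, pushl e1, pushl e2, pushl e3, e4]
  simp only [mul_assoc]

end Grid

-- PART 4: conjugation through one UTcPair
set_option maxHeartbeats 2000000
section GLem

variable {N D : ℕ} [NeZero N]

lemma Z_comm_U (v : GIdx N D) (j : Fin D) (h : v.2 ≠ j.succ) :
    Commute (op1 Zg v) (UTcPair j) := by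
  rw [UTcPair_eq]
  exact (((comm_HL Zg v _ h).mul_right (Z_comm_CZr v _)).mul_right
    (comm_HL Zg v _ h)).mul_right (Z_comm_CZv v j)

lemma X_comm_U (v : GIdx N D) (j : Fin D) (h1 : v.2 ≠ j.castSucc) (h2 : v.2 ≠ j.succ) :
    Commute (op1 Xg v) (UTcPair j) := by
  rw [UTcPair_eq]
  exact (((comm_HL Xg v _ h2).mul_right (X_comm_CZr v _ h2)).mul_right
    (comm_HL Xg v _ h2)).mul_right (X_comm_CZv v j h1 h2)

lemma G1 (i : Fin N) (j : Fin D) :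
    (op1 Zg ((i, j.castSucc) : GIdx N D) * op1 Xg ((i, j.succ) : GIdx N D)) * UTcPair j =
      UTcPair j * op1 Xg ((i, j.succ) : GIdx N D) := by
  have hcol := col_cs_ne_sc j
  have e1 := push_mul (M := MatG N D)
    (comm_HL Zg ((i, j.castSucc)) j.succ hcol).eq (X_hl i j.succ)
  have e2 := ((Z_comm_CZr ((i, j.castSucc) : GIdx N D) j.succ).mul_left
    (Z_comm_CZr ((i, j.succ) : GIdx N D) j.succ)).eq
  have e3 := push_mul (M := MatG N D)
    (comm_HL Zg ((i, j.castSucc)) j.succ hcol).eq (Z_hl i j.succ)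
  have e4 : (op1 Zg ((i, j.castSucc) : GIdx N D) * op1 Xg ((i, j.succ) : GIdx N D)) *
      CZv N D j = CZv N D j * op1 Xg ((i, j.succ) : GIdx N D) := by
    have h := push_mul (M := MatG N D)
      (Z_comm_CZv ((i, j.castSucc) : GIdx N D) j).eq (Xout_push_CZv i j)
    rwa [Zcancel] at h
  rw [UTcPair_eq]
  exact chain4 e1 e2 e3 e4

lemma G2 (hN : 3 ≤ N) (i : Fin N) (j : Fin D) :
    (op1 Zg ((i - 1, j.castSucc) : GIdx N D) * op1 Xg ((i, j.castSucc) : GIdx N D) *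
        op1 Zg ((i + 1, j.castSucc) : GIdx N D) * op1 Zg ((i, j.succ) : GIdx N D)) *
      UTcPair j =
    UTcPair j * (op1 Xg ((i, j.castSucc) : GIdx N D) *
      (op1 Xg ((i - 1, j.succ) : GIdx N D) * op1 Xg ((i + 1, j.succ) : GIdx N D))) := by
  have hcol := col_cs_ne_sc j
  have r1 : i - 1 ≠ i := row_sub_ne hN i
  have r2 : i + 1 ≠ i := row_add_ne hN i
  have r3 : i - 1 ≠ i + 1 := row_sub_ne_add hN i
  set cs := j.castSucc with hcs
  set sc := j.succ with hsc
  set Zm := op1 Zg ((i - 1, cs) : GIdx N D) with hZm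
  set Xc := op1 Xg ((i, cs) : GIdx N D) with hXc
  set Zp := op1 Zg ((i + 1, cs) : GIdx N D) with hZp
  set Zw := op1 Zg ((i, sc) : GIdx N D) with hZw
  set Xw := op1 Xg ((i, sc) : GIdx N D) with hXw
  set Zwm := op1 Zg ((i - 1, sc) : GIdx N D) with hZwm
  set Zwp := op1 Zg ((i + 1, sc) : GIdx N D) with hZwp
  set Xwm := op1 Xg ((i - 1, sc) : GIdx N D) with hXwm
  set Xwp := op1 Xg ((i + 1, sc) : GIdx N D) with hXwp
  have e1 : (Zm * Xc * Zp * Zw) * HL N D sc = HL N D sc * (Zm * Xc * Zp * Xw) :=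
    push_mul (push_mul (push_mul (comm_HL Zg _ sc hcol).eq (comm_HL Xg _ sc hcol).eq)
      (comm_HL Zg _ sc hcol).eq) (Z_hl i sc)
  have e2 : (Zm * Xc * Zp * Xw) * CZr N D sc =
      CZr N D sc * (Zm * Xc * Zp * ((Zwm * Zwp) * Xw)) :=
    push_mul (push_mul (push_mul (Z_comm_CZr _ sc).eq (X_comm_CZr _ sc hcol).eq)
      (Z_comm_CZr _ sc).eq) (X_push_CZr hN i sc)
  have e3 : (Zm * Xc * Zp * ((Zwm * Zwp) * Xw)) * HL N D sc =
      HL N D sc * (Zm * Xc * Zp * ((Xwm * Xwp) * Zw)) :=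
    push_mul (push_mul (push_mul (comm_HL Zg _ sc hcol).eq (comm_HL Xg _ sc hcol).eq)
      (comm_HL Zg _ sc hcol).eq)
      (push_mul (push_mul (Z_hl (i - 1) sc) (Z_hl (i + 1) sc)) (X_hl i sc))
  have e4 : (Zm * Xc * Zp * ((Xwm * Xwp) * Zw)) * CZv N D j =
      CZv N D j * ((Zm * (Zw * Xc) * Zp) * (((Zm * Xwm) * (Zp * Xwp)) * Zw)) :=
    push_mul (push_mul (push_mul (Z_comm_CZv _ j).eq (Xin_push_CZv i j))
      (Z_comm_CZv _ j).eq)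
      (push_mul (push_mul (Xout_push_CZv (i - 1) j) (Xout_push_CZv (i + 1) j))
        (Z_comm_CZv _ j).eq)
  have hT4 : (Zm * (Zw * Xc) * Zp) * (((Zm * Xwm) * (Zp * Xwp)) * Zw) =
      Xc * (Xwm * Xwp) := by
    have w1 : Commute Zp Zm := op1_op1_comm _ _ (site_ne_row r3.symm)
    have w2 : Commute Xc Zm := op1_op1_comm _ _ (site_ne_row (Ne.symm r1))
    have w3 : Commute Zw Zm := op1_op1_comm _ _ (site_ne_row (Ne.symm r1))
    have w4 : Commute Xwm Zp := op1_op1_comm _ _ (site_ne_row r3)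
    have w5 : Commute Xwp Zw := op1_op1_comm _ _ (site_ne_row r2)
    have w6 : Commute Xwm Zw := op1_op1_comm _ _ (site_ne_row r1)
    have w7 : Commute Xc Zw := op1_op1_comm _ _ (site_ne_col hcol)
    simp only [mul_assoc]
    rw [comm3 w1, comm3 w2, comm3 w3, Zcancel, comm3 w4, Zcancel, w5.eq, comm3 w6,
      comm3 w7, Zcancel]
  have e4' : (Zm * Xc * Zp * ((Xwm * Xwp) * Zw)) * CZv N D j =
      CZv N D j * (Xc * (Xwm * Xwp)) := by rw [e4, hT4]
  rw [UTcPair_eq]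
  exact chain4 e1 e2 e3 e4'

end GLem

-- PART 5: assembly
section Assembly

variable {N D : ℕ} [NeZero N]

lemma stab_of_flow (S : MatG N D) (P : Fin (D + 1) → MatG N D)
    (hP : ∀ k : Fin D, P k.succ * UTcPair k = UTcPair k * P k.castSucc)
    (hlast : P (Fin.last D) = S)
    (h0 : (P 0).mulVec (ketPlusAll (GIdx N D)) = ketPlusAll (GIdx N D)) :
    S.mulVec (clusterState N D) = clusterState N D := by
  have key := push_chain (fun j : Fin D => UTcPair (N := N) (D := D) j) P hP
  rw [hlast] at key
  unfold clusterState
  rw [Matrix.mulVec_mulVec, key, ← Matrix.mulVec_mulVec, h0]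

lemma X3_mulVec (a b c : GIdx N D) :
    (op1 Xg a * (op1 Xg b * op1 Xg c)).mulVec (ketPlusAll (GIdx N D)) =
      ketPlusAll (GIdx N D) := by
  rw [← Matrix.mulVec_mulVec, ← Matrix.mulVec_mulVec, X_mulVec_ketPlusAll,
    X_mulVec_ketPlusAll, X_mulVec_ketPlusAll]

lemma fin_ne_of_val_ne {n : ℕ} {a b : Fin n} (h : a.val ≠ b.val) : a ≠ b :=
  fun he => h (congrArg Fin.val he)

end Assembly

/-- Theorem 3 for `T_c`: the resource state built from `U_{T_c}` is a +1
eigenvector of all bulk, left-boundary and right-boundary cluster-state stabilizers.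
Mathematical columns `1,…,D+1` correspond to `Fin (D+1)` values `0,…,D`. -/
theorem cluster_state_stabilizers {N D : ℕ} [NeZero N] (hN : 3 ≤ N) (hD : 2 ≤ D) :
    (∀ (i : Fin N) (j : Fin (D - 1)),
      (op1 Zg ((i, ⟨j.1, by have := j.2; omega⟩) : GIdx N D) *
        op1 Xg ((i, ⟨j.1 + 1, by have := j.2; omega⟩) : GIdx N D) *
        op1 Zg ((i - 1, ⟨j.1 + 1, by have := j.2; omega⟩) : GIdx N D) *
        op1 Zg ((i + 1, ⟨j.1 + 1, by have := j.2; omega⟩) : GIdx N D) *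
        op1 Zg ((i, ⟨j.1 + 2, by have := j.2; omega⟩) : GIdx N D)).mulVec
          (clusterState N D) = clusterState N D) ∧
    (∀ i : Fin N,
      (op1 Xg ((i, ⟨0, by omega⟩) : GIdx N D) *
        op1 Zg ((i - 1, ⟨0, by omega⟩) : GIdx N D) *
        op1 Zg ((i + 1, ⟨0, by omega⟩) : GIdx N D) *
        op1 Zg ((i, ⟨1, by omega⟩) : GIdx N D)).mulVec
          (clusterState N D) = clusterState N D) ∧
    (∀ i : Fin N,
      (op1 Zg ((i, ⟨D - 1, by omega⟩) : GIdx N D) *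
        op1 Xg ((i, ⟨D, by omega⟩) : GIdx N D)).mulVec
          (clusterState N D) = clusterState N D) := by
  have r1 : ∀ i : Fin N, i - 1 ≠ i := row_sub_ne hN
  refine ⟨?_, ?_, ?_⟩
  · -- bulk stabilizers
    intro i j
    have hj : j.1 < D - 1 := j.2
    have hre : op1 Zg ((i, ⟨j.1, by omega⟩) : GIdx N D) *
          op1 Xg ((i, ⟨j.1 + 1, by omega⟩) : GIdx N D) *
          op1 Zg ((i - 1, ⟨j.1 + 1, by omega⟩) : GIdx N D) *
          op1 Zg ((i + 1, ⟨j.1 + 1, by omega⟩) : GIdx N D) *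
          op1 Zg ((i, ⟨j.1 + 2, by omega⟩) : GIdx N D) =
        op1 Zg ((i, ⟨j.1, by omega⟩) : GIdx N D) *
          (op1 Zg ((i - 1, ⟨j.1 + 1, by omega⟩) : GIdx N D) *
            op1 Xg ((i, ⟨j.1 + 1, by omega⟩) : GIdx N D) *
            op1 Zg ((i + 1, ⟨j.1 + 1, by omega⟩) : GIdx N D) *
            op1 Zg ((i, ⟨j.1 + 2, by omega⟩) : GIdx N D)) := by
      have w : Commute (op1 Xg ((i, ⟨j.1 + 1, by omega⟩) : GIdx N D))
          (op1 Zg ((i - 1, ⟨j.1 + 1, by omega⟩) : GIdx N D)) :=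
        op1_op1_comm _ _ (site_ne_row (Ne.symm (r1 i)))
      simp only [mul_assoc]
      rw [comm3 w]
    rw [hre]
    refine stab_of_flow _ (fun k => if (k : ℕ) ≤ j.1 then
        op1 Xg ((i, ⟨j.1 + 1, by omega⟩) : GIdx N D) *
          (op1 Xg ((i - 1, ⟨j.1 + 2, by omega⟩) : GIdx N D) *
            op1 Xg ((i + 1, ⟨j.1 + 2, by omega⟩) : GIdx N D))
      else if (k : ℕ) = j.1 + 1 then
        op1 Zg ((i, ⟨j.1, by omega⟩) : GIdx N D) *
          (op1 Xg ((i, ⟨j.1 + 1, by omega⟩) : GIdx N D) *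
            (op1 Xg ((i - 1, ⟨j.1 + 2, by omega⟩) : GIdx N D) *
              op1 Xg ((i + 1, ⟨j.1 + 2, by omega⟩) : GIdx N D)))
      else
        op1 Zg ((i, ⟨j.1, by omega⟩) : GIdx N D) *
          (op1 Zg ((i - 1, ⟨j.1 + 1, by omega⟩) : GIdx N D) *
            op1 Xg ((i, ⟨j.1 + 1, by omega⟩) : GIdx N D) *
            op1 Zg ((i + 1, ⟨j.1 + 1, by omega⟩) : GIdx N D) *
            op1 Zg ((i, ⟨j.1 + 2, by omega⟩) : GIdx N D))) ?_ ?_ ?_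
    · intro k
      simp only [Fin.val_succ, Fin.coe_castSucc]
      by_cases h1 : (k : ℕ) < j.1
      · rw [if_pos (show (k : ℕ) + 1 ≤ j.1 by omega), if_pos (show (k : ℕ) ≤ j.1 by omega)]
        refine Commute.eq ?_
        refine Commute.mul_left ?_ (Commute.mul_left ?_ ?_) <;>
          exact X_comm_U _ k (fin_ne_of_val_ne (by simp only [Fin.coe_castSucc, Fin.val_succ]; omega)) (fin_ne_of_val_ne (by simp only [Fin.coe_castSucc, Fin.val_succ]; omega))
      · by_cases h2 : (k : ℕ) = j.1
        · rw [if_neg (by omega), if_pos (by omega), if_pos (by omega)]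
          have hcm : (⟨j.1, by omega⟩ : Fin (D + 1)) = k.castSucc :=
            Fin.ext (show j.1 = (k : ℕ) from h2.symm)
          have hc0 : (⟨j.1 + 1, by omega⟩ : Fin (D + 1)) = k.succ :=
            Fin.ext (show j.1 + 1 = (k : ℕ) + 1 by omega)
          rw [hcm, hc0, ← mul_assoc]
          refine push_mul (G1 i k) (Commute.eq ?_)
          refine Commute.mul_left ?_ ?_ <;>
            exact X_comm_U _ k (fin_ne_of_val_ne (by simp only [Fin.coe_castSucc, Fin.val_succ]; omega)) (fin_ne_of_val_ne (by simp only [Fin.coe_castSucc, Fin.val_succ]; omega))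
        · by_cases h3 : (k : ℕ) = j.1 + 1
          · rw [if_neg (by omega), if_neg (by omega), if_neg (by omega), if_pos (by omega)]
            have hc0 : (⟨j.1 + 1, by omega⟩ : Fin (D + 1)) = k.castSucc :=
              Fin.ext (show j.1 + 1 = (k : ℕ) from h3.symm)
            have hcp : (⟨j.1 + 2, by omega⟩ : Fin (D + 1)) = k.succ :=
              Fin.ext (show j.1 + 2 = (k : ℕ) + 1 by omega)
            rw [hc0, hcp]
            exact push_mul (Commute.eq (Z_comm_U _ k (fin_ne_of_val_ne (by simp only [Fin.coe_castSucc, Fin.val_succ]; omega))))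
              (G2 hN i k)
          · rw [if_neg (by omega), if_neg (by omega), if_neg (by omega), if_neg (by omega)]
            refine Commute.eq ?_
            refine Commute.mul_left (Z_comm_U _ k (fin_ne_of_val_ne (by simp only [Fin.coe_castSucc, Fin.val_succ]; omega))) ?_
            refine Commute.mul_left (Commute.mul_left (Commute.mul_left ?_ ?_) ?_) ?_
            · exact Z_comm_U _ k (fin_ne_of_val_ne (by simp only [Fin.coe_castSucc, Fin.val_succ]; omega))
            · exact X_comm_U _ k (fin_ne_of_val_ne (by simp only [Fin.coe_castSucc, Fin.val_succ]; omega)) (fin_ne_of_val_ne (by simp only [Fin.coe_castSucc, Fin.val_succ]; omega))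
            · exact Z_comm_U _ k (fin_ne_of_val_ne (by simp only [Fin.coe_castSucc, Fin.val_succ]; omega))
            · exact Z_comm_U _ k (fin_ne_of_val_ne (by simp only [Fin.coe_castSucc, Fin.val_succ]; omega))
    · simp only [Fin.val_last]
      rw [if_neg (by omega), if_neg (by omega)]
    · simp only [Fin.val_zero]
      simp only [Nat.zero_le, if_true]
      exact X3_mulVec _ _ _
  · -- left boundary
    intro i
    have hre : op1 Xg ((i, ⟨0, by omega⟩) : GIdx N D) *
          op1 Zg ((i - 1, ⟨0, by omega⟩) : GIdx N D) *
          op1 Zg ((i + 1, ⟨0, by omega⟩) : GIdx N D) *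
          op1 Zg ((i, ⟨1, by omega⟩) : GIdx N D) =
        op1 Zg ((i - 1, ⟨0, by omega⟩) : GIdx N D) *
          op1 Xg ((i, ⟨0, by omega⟩) : GIdx N D) *
          op1 Zg ((i + 1, ⟨0, by omega⟩) : GIdx N D) *
          op1 Zg ((i, ⟨1, by omega⟩) : GIdx N D) := by
      have w : Commute (op1 Xg ((i, ⟨0, by omega⟩) : GIdx N D))
          (op1 Zg ((i - 1, ⟨0, by omega⟩) : GIdx N D)) :=
        op1_op1_comm _ _ (site_ne_row (Ne.symm (r1 i)))
      simp only [mul_assoc]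
      rw [comm3 w]
    rw [hre]
    refine stab_of_flow _ (fun k => if (k : ℕ) = 0 then
        op1 Xg ((i, ⟨0, by omega⟩) : GIdx N D) *
          (op1 Xg ((i - 1, ⟨1, by omega⟩) : GIdx N D) *
            op1 Xg ((i + 1, ⟨1, by omega⟩) : GIdx N D))
      else
        op1 Zg ((i - 1, ⟨0, by omega⟩) : GIdx N D) *
          op1 Xg ((i, ⟨0, by omega⟩) : GIdx N D) *
          op1 Zg ((i + 1, ⟨0, by omega⟩) : GIdx N D) *
          op1 Zg ((i, ⟨1, by omega⟩) : GIdx N D)) ?_ ?_ ?_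
    · intro k
      simp only [Fin.val_succ, Fin.coe_castSucc]
      by_cases h1 : (k : ℕ) = 0
      · rw [if_neg (by omega), if_pos (by omega)]
        have hc0 : (⟨0, by omega⟩ : Fin (D + 1)) = k.castSucc :=
          Fin.ext (show 0 = (k : ℕ) from h1.symm)
        have hc1 : (⟨1, by omega⟩ : Fin (D + 1)) = k.succ :=
          Fin.ext (show 1 = (k : ℕ) + 1 by omega)
        rw [hc0, hc1]
        exact G2 hN i k
      · rw [if_neg (by omega), if_neg (by omega)]
        refine Commute.eq ?_
        refine Commute.mul_left (Commute.mul_left (Commute.mul_left ?_ ?_) ?_) ?_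
        · exact Z_comm_U _ k (fin_ne_of_val_ne (by simp only [Fin.coe_castSucc, Fin.val_succ]; omega))
        · exact X_comm_U _ k (fin_ne_of_val_ne (by simp only [Fin.coe_castSucc, Fin.val_succ]; omega)) (fin_ne_of_val_ne (by simp only [Fin.coe_castSucc, Fin.val_succ]; omega))
        · exact Z_comm_U _ k (fin_ne_of_val_ne (by simp only [Fin.coe_castSucc, Fin.val_succ]; omega))
        · exact Z_comm_U _ k (fin_ne_of_val_ne (by simp only [Fin.coe_castSucc, Fin.val_succ]; omega))
    · simp only [Fin.val_last]
      rw [if_neg (by omega)]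
    · simp only [Fin.val_zero]
      rw [if_true]
      exact X3_mulVec _ _ _
  · -- right boundary
    intro i
    refine stab_of_flow _ (fun k => if (k : ℕ) = D then
        op1 Zg ((i, ⟨D - 1, by omega⟩) : GIdx N D) *
          op1 Xg ((i, ⟨D, by omega⟩) : GIdx N D)
      else op1 Xg ((i, ⟨D, by omega⟩) : GIdx N D)) ?_ ?_ ?_
    · intro k
      simp only [Fin.val_succ, Fin.coe_castSucc]
      by_cases h1 : (k : ℕ) + 1 = D
      · rw [if_pos (by omega), if_neg (by omega)]
        have hc0 : (⟨D - 1, by omega⟩ : Fin (D + 1)) = k.castSucc :=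
          Fin.ext (show D - 1 = (k : ℕ) by omega)
        have hc1 : (⟨D, by omega⟩ : Fin (D + 1)) = k.succ :=
          Fin.ext (show D = (k : ℕ) + 1 by omega)
        rw [hc0, hc1]
        exact G1 i k
      · rw [if_neg (by omega), if_neg (by omega)]
        exact Commute.eq (X_comm_U _ k (fin_ne_of_val_ne (by simp only [Fin.coe_castSucc, Fin.val_succ]; omega))
          (fin_ne_of_val_ne (by simp only [Fin.coe_castSucc, Fin.val_succ]; omega)))
    · simp only [Fin.val_last]
      rw [if_true]
    · simp only [Fin.val_zero]
      simp only [show ¬ (0 : ℕ) = D by omega, if_false]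
      exact X_mulVec_ketPlusAll _


end QCA

end
end
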